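/- Let γ > 0, K > 0, 0 ≤ σ_s < σ_f with σ_s < 1, and let t₁ ∈ ℝ, T > t₁, and x₁ with 0 < x₁ ≤ 1. For each t₂ ∈ [t₁, T] with x₁ - γ K (t₂ - t₁) > 0, let (X_{t₂}, Y_{t₂}) be the solution on [t₂, T] of the SIR system X' = -γ σ_s X Y, Y' = γ σ_s X Y - γ Y with initial data (X_{t₂}(t₂), Y_{t₂}(t₂)) = (x₁ - γ K (t₂ - t₁), K). Then the function t₂ ↦ (∫_{t₂}^{T} (σ_f X_{t₂}(r) - 1)/Y_{t₂}(r) dr - 1/(γ K)) · Y_{t₂}(T) is strictly decreasing; equivalently, t₂ ↦ (σ_f - σ_s) Y_{t₂}(T) ∫_{t₂}^{T} X_{t₂}(r)/Y_{t₂}(r) dr - 1/γ is strictly decreasing. -/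

import Mathlib

open Set intervalIntegral MeasureTheory

lemma my_intervalIntegrable {f : ℝ → ℝ} {c T s t : ℝ} (hf : ContinuousOn f (Icc c T))
    (hct : c ≤ T) (hs : s ∈ Icc c T) (ht : t ∈ Icc c T) :
    IntervalIntegrable f volume s t := by
  apply ContinuousOn.intervalIntegrable
  apply hf.mono
  rw [← uIcc_of_le hct] at hs ht ⊢
  exact uIcc_subset_uIcc hs ht

lemma primitive_hasDerivAt {f : ℝ → ℝ} {c T : ℝ} (hf : ContinuousOn f (Icc c T))
    (hct : c ≤ T) {x : ℝ} (hx : x ∈ Ioo c T) :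
    HasDerivAt (fun s => ∫ u in c..s, f u) (f x) x := by
  have hxIcc : x ∈ Icc c T := Ioo_subset_Icc_self hx
  have hIoc : Ioc x T ⊆ Icc c T := fun y hy => ⟨hx.1.le.trans hy.1.le, hy.2⟩
  have hIcc' : Icc c x ⊆ Icc c T := Icc_subset_Icc le_rfl hxIcc.2
  have hmem_right : Icc c T ∈ nhdsWithin x (Ioi x) :=
    Filter.mem_of_superset (Ioc_mem_nhdsGT_of_mem ⟨le_rfl, hx.2⟩) hIoc
  have hmem_left : Icc c T ∈ nhdsWithin x (Iic x) :=
    Filter.mem_of_superset (Icc_mem_nhdsLE_of_mem ⟨hx.1, le_rfl⟩)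
      (fun y hy => ⟨hy.1, hy.2.trans hxIcc.2⟩)
  have hint : IntervalIntegrable f volume c x :=
    my_intervalIntegrable hf hct ⟨le_rfl, hct⟩ hxIcc
  have hright : HasDerivWithinAt (fun s => ∫ u in c..s, f u) (f x) (Ici x) x := by
    apply integral_hasDerivWithinAt_right (t := Ioi x) hint
    · exact ⟨Ioc x T, Ioc_mem_nhdsGT_of_mem ⟨le_rfl, hx.2⟩,
        (hf.mono hIoc).aestronglyMeasurable measurableSet_Ioc⟩
    · exact (hf x hxIcc).mono_of_mem_nhdsWithin hmem_right
  have hleft : HasDerivWithinAt (fun s => ∫ u in c..s, f u) (f x) (Iic x) x := by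
    apply integral_hasDerivWithinAt_right (t := Iic x) hint
    · exact ⟨Icc c x, Icc_mem_nhdsLE_of_mem ⟨hx.1, le_rfl⟩,
        (hf.mono hIcc').aestronglyMeasurable measurableSet_Icc⟩
    · exact (hf x hxIcc).mono_of_mem_nhdsWithin hmem_left
  have := hleft.union hright
  rwa [Iic_union_Ici, hasDerivWithinAt_univ] at this

/-- constancy of a function with zero derivative on the interior of an Icc -/
lemma const_of_zero_deriv {Z : ℝ → ℝ} {c T : ℝ} (hct : c ≤ T)
    (hZcont : ContinuousOn Z (Icc c T))
    (hZ : ∀ x ∈ Ioo c T, HasDerivWithinAt Z 0 (Ioo c T) x) :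
    ∀ s ∈ Icc c T, Z s = Z c := by
  intro s hs
  have hmono : MonotoneOn Z (Icc c T) := by
    apply monotoneOn_of_hasDerivWithinAt_nonneg (f' := fun _ => (0:ℝ)) (convex_Icc c T) hZcont
    · rw [interior_Icc]; exact hZ
    · intro x _; exact le_rfl
  have hanti : AntitoneOn Z (Icc c T) := by
    apply antitoneOn_of_hasDerivWithinAt_nonpos (f' := fun _ => (0:ℝ)) (convex_Icc c T) hZcont
    · rw [interior_Icc]; exact hZ
    · intro x _; exact le_rfl
  have hc : c ∈ Icc c T := ⟨le_rfl, hct⟩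
  exact le_antisymm (hanti hc hs hs.1) (hmono hc hs hs.1)

/-- exp-representation: if `Z' = h·Z` on the interior, then `Z s = Z c · exp(∫_c^s h)`. -/
lemma exp_rep {h Z : ℝ → ℝ} {c T : ℝ} (hct : c ≤ T)
    (hh : ContinuousOn h (Icc c T))
    (hZcont : ContinuousOn Z (Icc c T))
    (hZ : ∀ x ∈ Ioo c T, HasDerivWithinAt Z (h x * Z x) (Ioo c T) x) :
    ∀ s ∈ Icc c T, Z s = Z c * Real.exp (∫ u in c..s, h u) := by
  set F : ℝ → ℝ := fun s => ∫ u in c..s, h u with hFdef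
  have contF : ContinuousOn F (Icc c T) := by
    rw [← uIcc_of_le hct]
    exact continuousOn_primitive_interval (by rw [uIcc_of_le hct]; exact hh.integrableOn_Icc)
  have key : ∀ s ∈ Icc c T, Z s * Real.exp (-F s) = Z c := by
    have hφcont : ContinuousOn (fun s => Z s * Real.exp (-F s)) (Icc c T) :=
      hZcont.mul (Real.continuous_exp.comp_continuousOn contF.neg)
    have hφ : ∀ x ∈ Ioo c T, HasDerivWithinAt (fun s => Z s * Real.exp (-F s)) 0 (Ioo c T) x := by
      intro x hx
      have hFx : HasDerivAt F (h x) x := primitive_hasDerivAt hh hct hx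
      have hexp : HasDerivAt (fun s => Real.exp (-F s)) (Real.exp (-F x) * (-h x)) x :=
        hFx.neg.exp
      have := (hZ x hx).mul hexp.hasDerivWithinAt
      have hval : h x * Z x * Real.exp (-F x) + Z x * (Real.exp (-F x) * -h x) = 0 := by ring
      rwa [hval] at this
    have := const_of_zero_deriv hct hφcont hφ
    intro s hs
    have h0 : F c = 0 := integral_same
    have := this s hs
    rwa [h0, neg_zero, Real.exp_zero, mul_one] at this
  intro s hs
  have := key s hs
  have hne : Real.exp (-F s) ≠ 0 := Real.exp_ne_zero _
  calc Z s = Z s * Real.exp (-F s) * Real.exp (F s) := by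
        rw [mul_assoc, ← Real.exp_add, neg_add_cancel, Real.exp_zero, mul_one]
    _ = Z c * Real.exp (F s) := by rw [this]

lemma sir_facts (γ σs c T x₀ y₀ : ℝ) (X Y : ℝ → ℝ)
    (hγ : 0 < γ) (hσs : 0 ≤ σs) (hσs1 : σs < 1)
    (hct : c ≤ T) (hx₀ : 0 < x₀) (hx₀1 : x₀ ≤ 1) (hy₀ : 0 < y₀)
    (hX : ∀ s ∈ Icc c T, HasDerivWithinAt X (-γ * σs * X s * Y s) (Icc c T) s)
    (hY : ∀ s ∈ Icc c T, HasDerivWithinAt Y (γ * σs * X s * Y s - γ * Y s) (Icc c T) s)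
    (hX0 : X c = x₀) (hY0 : Y c = y₀) :
    (∀ s ∈ Icc c T, 0 < X s ∧ X s ≤ x₀ ∧ 0 < Y s ∧ Y s ≤ y₀) ∧
    (∀ s ∈ Icc c T, Y T * (X s / Y s) = X s * Real.exp (∫ u in s..T, γ * (σs * X u - 1))) ∧
    (∀ s ∈ Icc c T, Real.log (X s) - σs * (X s + Y s) = Real.log x₀ - σs * (x₀ + y₀)) ∧
    ((∫ r in c..T, (σs * X r - 1) / Y r) = 1 / (γ * y₀) - 1 / (γ * Y T)) := by
  have contX : ContinuousOn X (Icc c T) := fun s hs => (hX s hs).continuousWithinAt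
  have contY : ContinuousOn Y (Icc c T) := fun s hs => (hY s hs).continuousWithinAt
  -- representation of Y
  set f : ℝ → ℝ := fun u => γ * (σs * X u - 1) with hfdef
  have contf : ContinuousOn f (Icc c T) :=
    continuousOn_const.mul ((continuousOn_const.mul contX).sub continuousOn_const)
  have hYrep : ∀ s ∈ Icc c T, Y s = y₀ * Real.exp (∫ u in c..s, f u) := by
    have := exp_rep hct contf contY (fun x hx => by
      have := (hY x (Ioo_subset_Icc_self hx)).mono Ioo_subset_Icc_self
      have hval : γ * σs * X x * Y x - γ * Y x = f x * Y x := by simp only [hfdef]; ring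
      rwa [hval] at this)
    intro s hs; rw [← hY0]; exact this s hs
  have hYpos : ∀ s ∈ Icc c T, 0 < Y s := by
    intro s hs; rw [hYrep s hs]; positivity
  -- representation of X
  set g : ℝ → ℝ := fun u => -(γ * σs) * Y u with hgdef
  have contg : ContinuousOn g (Icc c T) := continuousOn_const.mul contY
  have hXrep : ∀ s ∈ Icc c T, X s = x₀ * Real.exp (∫ u in c..s, g u) := by
    have := exp_rep hct contg contX (fun x hx => by
      have := (hX x (Ioo_subset_Icc_self hx)).mono Ioo_subset_Icc_self
      have hval : -γ * σs * X x * Y x = g x * X x := by simp only [hgdef]; ring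
      rwa [hval] at this)
    intro s hs; rw [← hX0]; exact this s hs
  have hXpos : ∀ s ∈ Icc c T, 0 < X s := by
    intro s hs; rw [hXrep s hs]; positivity
  -- X is antitone
  have hXanti : AntitoneOn X (Icc c T) := by
    apply antitoneOn_of_hasDerivWithinAt_nonpos (f' := fun s => -γ * σs * X s * Y s)
      (convex_Icc c T) contX
    · rw [interior_Icc]; exact fun x hx => (hX x (Ioo_subset_Icc_self hx)).mono Ioo_subset_Icc_self
    · rw [interior_Icc]; intro x hx
      have h1 := hXpos x (Ioo_subset_Icc_self hx)
      have h2 := hYpos x (Ioo_subset_Icc_self hx)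
      nlinarith [mul_nonneg (mul_nonneg (mul_nonneg hγ.le hσs) h1.le) h2.le]
  have hXle : ∀ s ∈ Icc c T, X s ≤ x₀ := by
    intro s hs; rw [← hX0]; exact hXanti ⟨le_rfl, hct⟩ hs hs.1
  -- Y is antitone
  have hYanti : AntitoneOn Y (Icc c T) := by
    apply antitoneOn_of_hasDerivWithinAt_nonpos
      (f' := fun s => γ * σs * X s * Y s - γ * Y s) (convex_Icc c T) contY
    · rw [interior_Icc]; exact fun x hx => (hY x (Ioo_subset_Icc_self hx)).mono Ioo_subset_Icc_self
    · rw [interior_Icc]; intro x hx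
      have h1 := hXpos x (Ioo_subset_Icc_self hx)
      have h2 := hYpos x (Ioo_subset_Icc_self hx)
      have h3 := hXle x (Ioo_subset_Icc_self hx)
      have h4 : σs * X x ≤ 1 := by nlinarith
      nlinarith [mul_le_mul_of_nonneg_right (mul_le_mul_of_nonneg_left h4 hγ.le) h2.le]
  have hYle : ∀ s ∈ Icc c T, Y s ≤ y₀ := by
    intro s hs; rw [← hY0]; exact hYanti ⟨le_rfl, hct⟩ hs hs.1
  refine ⟨fun s hs => ⟨hXpos s hs, hXle s hs, hYpos s hs, hYle s hs⟩, ?_, ?_, ?_⟩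
  -- P2: ratio representation
  · intro s hs
    have hTm : T ∈ Icc c T := ⟨hct, le_rfl⟩
    have h1 : Y T = y₀ * Real.exp (∫ u in c..T, f u) := hYrep T hTm
    have h2 : Y s = y₀ * Real.exp (∫ u in c..s, f u) := hYrep s hs
    have hadd : (∫ u in c..s, f u) + (∫ u in s..T, f u) = ∫ u in c..T, f u :=
      integral_add_adjacent_intervals (my_intervalIntegrable contf hct ⟨le_rfl, hct⟩ hs)
        (my_intervalIntegrable contf hct hs hTm)
    have hYsne : Y s ≠ 0 := (hYpos s hs).ne'
    have hsT : (∫ u in s..T, f u) = (∫ u in c..T, f u) - (∫ u in c..s, f u) := by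
      linarith [hadd]
    rw [h1, h2, hsT, Real.exp_sub]
    have he1 : Real.exp (∫ u in c..s, f u) ≠ 0 := Real.exp_ne_zero _
    have he2 : Real.exp (∫ u in c..T, f u) ≠ 0 := Real.exp_ne_zero _
    field_simp
  -- P3 conserved quantity
  · have contκ : ContinuousOn (fun s => Real.log (X s) - σs * (X s + Y s)) (Icc c T) :=
      (ContinuousOn.log contX (fun s hs => (hXpos s hs).ne')).sub
        (continuousOn_const.mul (contX.add contY))
    have hκ : ∀ x ∈ Ioo c T,
        HasDerivWithinAt (fun s => Real.log (X s) - σs * (X s + Y s)) 0 (Ioo c T) x := by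
      intro x hx
      have hxI := Ioo_subset_Icc_self hx
      have hXne : X x ≠ 0 := (hXpos x hxI).ne'
      have hX' := (hX x hxI).mono Ioo_subset_Icc_self
      have hY' := (hY x hxI).mono Ioo_subset_Icc_self
      have hlog := hX'.log hXne
      have hsum := (hX'.add hY').const_mul σs
      have hcomb := hlog.sub hsum
      have hval : -γ * σs * X x * Y x / X x -
          σs * (-γ * σs * X x * Y x + (γ * σs * X x * Y x - γ * Y x)) = 0 := by
        field_simp
        ring
      rwa [hval] at hcomb
    intro s hs
    have := const_of_zero_deriv hct contκ hκ s hs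
    rw [this, hX0, hY0]
  -- P4 FTC for (σs X - 1)/Y
  · have hTm : T ∈ Icc c T := ⟨hct, le_rfl⟩
    have hcm : c ∈ Icc c T := ⟨le_rfl, hct⟩
    have contInt : ContinuousOn (fun r => (σs * X r - 1) / Y r) (Icc c T) :=
      ((continuousOn_const.mul contX).sub continuousOn_const).div contY
        (fun s hs => (hYpos s hs).ne')
    have contψ : ContinuousOn (fun s => -(1 / (γ * Y s))) (Icc c T) :=
      (continuousOn_const.div (continuousOn_const.mul contY)
        (fun s hs => (mul_pos hγ (hYpos s hs)).ne')).neg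
    have hderiv : ∀ x ∈ Ioo c T,
        HasDerivWithinAt (fun s => -(1 / (γ * Y s))) ((σs * X x - 1) / Y x) (Ioi x) x := by
      intro x hx
      have hxI := Ioo_subset_Icc_self hx
      have hYne : Y x ≠ 0 := (hYpos x hxI).ne'
      have hγYne : γ * Y x ≠ 0 := by positivity
      have h1 : HasDerivWithinAt (fun s => -(1 / (γ * Y s)))
          ((σs * X x - 1) / Y x) (Icc c T) x := by
        have hinv := (((hY x hxI).const_mul γ).inv hγYne).neg
        have hval : -(-(γ * (γ * σs * X x * Y x - γ * Y x)) / (γ * Y x) ^ 2)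
            = (σs * X x - 1) / Y x := by
          field_simp
        rw [hval] at hinv
        have hfun : (-(fun y => γ * Y y)⁻¹) = (fun s => -(1 / (γ * Y s))) := by
          funext s; simp only [Pi.neg_apply, Pi.inv_apply, one_div]
        rwa [hfun] at hinv
      exact h1.mono_of_mem_nhdsWithin (Filter.mem_of_superset
        (Ioc_mem_nhdsGT_of_mem ⟨le_rfl, hx.2⟩)
        (fun y hy => ⟨hx.1.le.trans hy.1.le, hy.2⟩))
    have heq := integral_eq_sub_of_hasDeriv_right_of_le hct contψ hderiv
      (my_intervalIntegrable contInt hct hcm hTm)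
    rw [heq, hY0]
    ring

/-- Pointwise comparison of susceptible fractions of two solutions on `[b,T]`. -/
lemma X_comparison (γ σs b T κa κb : ℝ) (Xa Ya Xb Yb : ℝ → ℝ)
    (hγ : 0 < γ) (hσs : 0 ≤ σs) (hbT : b ≤ T)
    (hXa : ∀ s ∈ Icc b T, HasDerivWithinAt Xa (-γ * σs * Xa s * Ya s) (Icc b T) s)
    (hXb : ∀ s ∈ Icc b T, HasDerivWithinAt Xb (-γ * σs * Xb s * Yb s) (Icc b T) s)
    (hXapos : ∀ s ∈ Icc b T, 0 < Xa s)
    (hXbpos : ∀ s ∈ Icc b T, 0 < Xb s)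
    (hκa : ∀ s ∈ Icc b T, Real.log (Xa s) - σs * (Xa s + Ya s) = κa)
    (hκb : ∀ s ∈ Icc b T, Real.log (Xb s) - σs * (Xb s + Yb s) = κb)
    (hκab : κb < κa)
    (hinit : Xb b < Xa b) :
    ∀ r ∈ Icc b T, Xb r ≤ Xa r := by
  by_contra hcon
  push_neg at hcon
  obtain ⟨r₀, hr₀, hr₀lt⟩ := hcon
  have contXa : ContinuousOn Xa (Icc b T) := fun s hs => (hXa s hs).continuousWithinAt
  have contXb : ContinuousOn Xb (Icc b T) := fun s hs => (hXb s hs).continuousWithinAt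
  set D : ℝ → ℝ := fun r => Xa r - Xb r with hDdef
  have contD : ContinuousOn D (Icc b T) := contXa.sub contXb
  set S : Set ℝ := {r ∈ Icc b T | D r ≤ 0} with hSdef
  have hSne : S.Nonempty := ⟨r₀, hr₀, by simp only [hDdef]; linarith⟩
  have hSclosed : IsClosed S :=
    ContinuousOn.preimage_isClosed_of_isClosed contD isClosed_Icc isClosed_Iic
  have hSbdd : BddBelow S := ⟨b, fun r hr => hr.1.1⟩
  set r' : ℝ := sInf S with hr'def
  have hr'S : r' ∈ S := hSclosed.csInf_mem hSne hSbdd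
  have hr'Icc : r' ∈ Icc b T := hr'S.1
  have hDb : 0 < D b := by simp only [hDdef]; linarith
  have hbr' : b < r' := by
    rcases lt_or_eq_of_le hr'Icc.1 with h | h
    · exact h
    · exfalso; have := hr'S.2; rw [← h] at this; linarith
  have hpos : ∀ r ∈ Ico b r', 0 < D r := by
    intro r hr
    by_contra hr2
    push_neg at hr2
    have : r ∈ S := ⟨⟨hr.1, hr.2.le.trans hr'Icc.2⟩, hr2⟩
    have h5 := csInf_le hSbdd this
    rw [← hr'def] at h5
    linarith [hr.2]
  -- D r' = 0
  have hDr'le : D r' ≤ 0 := hr'S.2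
  have hlim : Filter.Tendsto D (nhdsWithin r' (Ico b r')) (nhds (D r')) := by
    have h1 : ContinuousWithinAt D (Icc b T) r' := contD r' hr'Icc
    exact h1.tendsto.mono_left (nhdsWithin_mono r' (Ico_subset_Icc_self.trans
      (Icc_subset_Icc le_rfl hr'Icc.2)))
  have hNB : (nhdsWithin r' (Ico b r')).NeBot := right_nhdsWithin_Ico_neBot hbr'
  have hDr'ge : 0 ≤ D r' := by
    apply ge_of_tendsto hlim
    exact Filter.eventually_of_mem self_mem_nhdsWithin (fun r hr => (hpos r hr).le)
  have hDr' : D r' = 0 := le_antisymm hDr'le hDr'ge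
  have hXeq : Xa r' = Xb r' := by simp only [hDdef] at hDr'; linarith
  -- derivative of D at r' is positive
  have hYκ : σs * Yb r' - σs * Ya r' = κa - κb := by
    have h1 := hκa r' hr'Icc
    have h2 := hκb r' hr'Icc
    rw [hXeq] at h1
    linarith
  set d : ℝ := -γ * σs * Xa r' * Ya r' - -γ * σs * Xb r' * Yb r' with hddef
  have hdpos : 0 < d := by
    have hx := hXbpos r' hr'Icc
    have : d = γ * Xb r' * (σs * Yb r' - σs * Ya r') := by
      simp only [hddef]; rw [hXeq]; ring
    rw [this, hYκ]
    have : 0 < κa - κb := by linarith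
    positivity
  have hDd : HasDerivWithinAt D d (Icc b T) r' :=
    (hXa r' hr'Icc).sub (hXb r' hr'Icc)
  -- slopes from the left are negative, contradiction
  have hslope : Filter.Tendsto (slope D r') (nhdsWithin r' ((Icc b T) \ {r'}))
      (nhds d) := by
    rwa [hasDerivWithinAt_iff_tendsto_slope] at hDd
  have hslope' : Filter.Tendsto (slope D r') (nhdsWithin r' (Ico b r')) (nhds d) :=
    hslope.mono_left (nhdsWithin_mono r' (fun y hy =>
      ⟨⟨hy.1, hy.2.le.trans hr'Icc.2⟩, fun hx => absurd (Set.eq_of_mem_singleton hx ▸ hy.2) (lt_irrefl r')⟩))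
  have hdle : d ≤ 0 := by
    apply le_of_tendsto hslope'
    apply Filter.eventually_of_mem self_mem_nhdsWithin
    intro r hr
    have h1 : 0 < D r := hpos r hr
    have h2 : r - r' < 0 := by linarith [hr.2]
    have : slope D r' r = D r / (r - r') := by
      rw [slope_def_field]; rw [hDr']; ring_nf
    rw [this]
    exact le_of_lt (div_neg_of_pos_of_neg h1 h2)
  linarith

set_option maxHeartbeats 1000000 in
/-- Monotonicity used in the lemma on the interval `[t_c, t_f]`: for exit times `a < b`
from the boundary arc `y = K`, with subsequent strict quarantine (reproduction number
`σ_s`) until the final time `T`, the quantity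
`(∫_{t₂}^T (σ_f x - 1)/y - 1/(γK)) · y(T)`, equivalently
`(σ_f - σ_s) y(T) ∫_{t₂}^T x/y - 1/γ`, is strictly decreasing in `t₂`. -/
theorem boundary_exit_quantity_strictly_decreasing
    (γ K σs σf t₁ T x₁ : ℝ) (hγ : 0 < γ) (hK : 0 < K)
    (hσs : 0 ≤ σs) (hσsf : σs < σf) (hσs1 : σs < 1)
    (hT : t₁ < T) (hx₁pos : 0 < x₁) (hx₁le : x₁ ≤ 1)
    (a b : ℝ) (ha : a ∈ Icc t₁ T) (hb : b ∈ Icc t₁ T) (hab : a < b)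
    (hxa : 0 < x₁ - γ * K * (a - t₁)) (hxb : 0 < x₁ - γ * K * (b - t₁))
    (Xa Ya Xb Yb : ℝ → ℝ)
    (hXa : ∀ s ∈ Icc a T, HasDerivWithinAt Xa (-γ * σs * Xa s * Ya s) (Icc a T) s)
    (hYa : ∀ s ∈ Icc a T,
      HasDerivWithinAt Ya (γ * σs * Xa s * Ya s - γ * Ya s) (Icc a T) s)
    (hXa0 : Xa a = x₁ - γ * K * (a - t₁)) (hYa0 : Ya a = K)
    (hXb : ∀ s ∈ Icc b T, HasDerivWithinAt Xb (-γ * σs * Xb s * Yb s) (Icc b T) s)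
    (hYb : ∀ s ∈ Icc b T,
      HasDerivWithinAt Yb (γ * σs * Xb s * Yb s - γ * Yb s) (Icc b T) s)
    (hXb0 : Xb b = x₁ - γ * K * (b - t₁)) (hYb0 : Yb b = K) :
    ((∫ r in b..T, (σf * Xb r - 1) / Yb r) - 1 / (γ * K)) * Yb T
      < ((∫ r in a..T, (σf * Xa r - 1) / Ya r) - 1 / (γ * K)) * Ya T ∧
    (σf - σs) * Yb T * (∫ r in b..T, Xb r / Yb r) - 1 / γ
      < (σf - σs) * Ya T * (∫ r in a..T, Xa r / Ya r) - 1 / γ := by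
  have haT : a ≤ T := ha.2
  have hbT : b ≤ T := hb.2
  have hat1 : t₁ ≤ a := ha.1
  have hbt1 : t₁ ≤ b := hb.1
  have hγK : 0 < γ * K := mul_pos hγ hK
  have hxa1 : x₁ - γ * K * (a - t₁) ≤ 1 := by nlinarith
  have hxb1 : x₁ - γ * K * (b - t₁) ≤ 1 := by nlinarith
  -- facts for solution a on [a,T]
  obtain ⟨hbA, hrepA, hκAfull, hftcA⟩ := sir_facts γ σs a T (x₁ - γ * K * (a - t₁)) K Xa Ya
    hγ hσs hσs1 haT hxa hxa1 hK hXa hYa hXa0 hYa0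
  have hbIccA : b ∈ Icc a T := ⟨hab.le, hbT⟩
  have hTIccA : T ∈ Icc a T := ⟨haT, le_rfl⟩
  have contXa : ContinuousOn Xa (Icc a T) := fun s hs => (hXa s hs).continuousWithinAt
  have contYa : ContinuousOn Ya (Icc a T) := fun s hs => (hYa s hs).continuousWithinAt
  have contXb : ContinuousOn Xb (Icc b T) := fun s hs => (hXb s hs).continuousWithinAt
  have contYb : ContinuousOn Yb (Icc b T) := fun s hs => (hYb s hs).continuousWithinAt
  -- lower bound for Xa b
  have hXab_gt : Xb b < Xa b := by
    have hsub : Icc a b ⊆ Icc a T := Icc_subset_Icc le_rfl hbT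
    have hmono : MonotoneOn (fun s => Xa s + γ * σs * K * s) (Icc a b) := by
      apply monotoneOn_of_hasDerivWithinAt_nonneg
        (f' := fun s => -γ * σs * Xa s * Ya s + γ * σs * K * 1) (convex_Icc a b)
        ((contXa.mono hsub).add (continuousOn_const.mul continuousOn_id))
      · rw [interior_Icc]
        intro x hx
        have hxI : x ∈ Icc a T := hsub (Ioo_subset_Icc_self hx)
        have h1 : HasDerivWithinAt Xa (-γ * σs * Xa x * Ya x) (Ioo a b) x :=
          (hXa x hxI).mono (Ioo_subset_Icc_self.trans hsub)
        have h2 : HasDerivWithinAt (fun s => γ * σs * K * s) (γ * σs * K * 1) (Ioo a b) x :=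
          ((hasDerivAt_id x).const_mul (γ * σs * K)).hasDerivWithinAt
        exact h1.add h2
      · rw [interior_Icc]
        intro x hx
        have hxI : x ∈ Icc a T := hsub (Ioo_subset_Icc_self hx)
        obtain ⟨hp1, hp2, hp3, hp4⟩ := hbA x hxI
        have hXY : Xa x * Ya x ≤ K := by nlinarith
        nlinarith [mul_nonneg hγ.le hσs]
    have := hmono (left_mem_Icc.2 hab.le) (right_mem_Icc.2 hab.le) hab.le
    simp only at this
    have h2 : Xa b ≥ Xa a - γ * σs * K * (b - a) := by linarith
    rw [hXa0] at h2
    rw [hXb0]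
    nlinarith [mul_pos hγK (sub_pos.2 hab)]
  -- facts for solution a on [b,T]
  have hXaODE' : ∀ s ∈ Icc b T, HasDerivWithinAt Xa (-γ * σs * Xa s * Ya s) (Icc b T) s :=
    fun s hs => (hXa s (Icc_subset_Icc hab.le le_rfl hs)).mono (Icc_subset_Icc hab.le le_rfl)
  have hYaODE' : ∀ s ∈ Icc b T,
      HasDerivWithinAt Ya (γ * σs * Xa s * Ya s - γ * Ya s) (Icc b T) s :=
    fun s hs => (hYa s (Icc_subset_Icc hab.le le_rfl hs)).mono (Icc_subset_Icc hab.le le_rfl)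
  obtain ⟨hXabpos, hXable, hYabpos, _⟩ := hbA b hbIccA
  have hXab1 : Xa b ≤ 1 := hXable.trans hxa1
  obtain ⟨hbA', hrepA', hκA', _⟩ := sir_facts γ σs b T (Xa b) (Ya b) Xa Ya
    hγ hσs hσs1 hbT hXabpos hXab1 hYabpos hXaODE' hYaODE' rfl rfl
  -- facts for solution b on [b,T]
  obtain ⟨hbB, hrepB, hκB, hftcB⟩ := sir_facts γ σs b T (x₁ - γ * K * (b - t₁)) K Xb Yb
    hγ hσs hσs1 hbT hxb hxb1 hK hXb hYb hXb0 hYb0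
  -- κ comparison
  have hκab : Real.log (Xb b) - σs * (Xb b + K)
      < Real.log (Xa b) - σs * (Xa b + Ya b) := by
    have hXbbpos : 0 < Xb b := by rw [hXb0]; exact hxb
    have hq : 0 < Xb b / Xa b := div_pos hXbbpos hXabpos
    have hlog := Real.log_le_sub_one_of_pos hq
    rw [Real.log_div hXbbpos.ne' hXabpos.ne'] at hlog
    have hfrac : (Xa b - Xb b) ≤ (Xa b - Xb b) / Xa b := by
      rw [le_div_iff₀ hXabpos]
      nlinarith
    have hYab_le : Ya b ≤ K := (hbA b hbIccA).2.2.2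
    have hdiv : Xb b / Xa b - 1 = (Xb b - Xa b) / Xa b := by
      rw [sub_div, div_self hXabpos.ne']
    have hneg : (Xa b - Xb b) / Xa b = -((Xb b - Xa b) / Xa b) := by
      rw [← neg_div, neg_sub]
    have hmain : (Xa b - Xb b) / Xa b ≤ Real.log (Xa b) - Real.log (Xb b) := by
      rw [hneg]; linarith
    have hσsY : σs * (Ya b - K) ≤ 0 := mul_nonpos_of_nonneg_of_nonpos hσs (by linarith)
    nlinarith [mul_pos (sub_pos.2 hσs1) (sub_pos.2 hXab_gt)]
  rw [hXb0] at hκab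
  -- pointwise comparison of susceptibles on [b,T]
  have hcomp : ∀ r ∈ Icc b T, Xb r ≤ Xa r :=
    X_comparison γ σs b T (Real.log (Xa b) - σs * (Xa b + Ya b))
      (Real.log (x₁ - γ * K * (b - t₁)) - σs * (x₁ - γ * K * (b - t₁) + K)) Xa Ya Xb Yb hγ hσs hbT
      hXaODE' hXb (fun s hs => (hbA' s hs).1) (fun s hs => (hbB s hs).1)
      hκA' hκB hκab hXab_gt
  -- integral machinery
  have hTIccB : T ∈ Icc b T := ⟨hbT, le_rfl⟩
  have hbIccB : b ∈ Icc b T := ⟨le_rfl, hbT⟩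
  have haIccA : a ∈ Icc a T := ⟨le_rfl, haT⟩
  have hYaTpos : 0 < Ya T := (hbA T hTIccA).2.2.1
  have hYbTpos : 0 < Yb T := (hbB T hTIccB).2.2.1
  have hYane : ∀ s ∈ Icc a T, Ya s ≠ 0 := fun s hs => ((hbA s hs).2.2.1).ne'
  have hYbne : ∀ s ∈ Icc b T, Yb s ≠ 0 := fun s hs => ((hbB s hs).2.2.1).ne'
  have contDivA : ContinuousOn (fun r => Xa r / Ya r) (Icc a T) := contXa.div contYa hYane
  have contDivB : ContinuousOn (fun r => Xb r / Yb r) (Icc b T) := contXb.div contYb hYbne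
  have hIab_pos : 0 < ∫ r in a..b, Xa r / Ya r := by
    apply intervalIntegral_pos_of_pos_on
      (my_intervalIntegrable contDivA haT haIccA hbIccA)
      (fun x hx => div_pos (hbA x ⟨hx.1.le, hx.2.le.trans hbT⟩).1
        (hbA x ⟨hx.1.le, hx.2.le.trans hbT⟩).2.2.1)
      hab
  have hsplit : (∫ r in a..b, Xa r / Ya r) + (∫ r in b..T, Xa r / Ya r)
      = ∫ r in a..T, Xa r / Ya r :=
    integral_add_adjacent_intervals (my_intervalIntegrable contDivA haT haIccA hbIccA)
      (my_intervalIntegrable contDivA haT hbIccA hTIccA)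
  have contXa' : ContinuousOn Xa (Icc b T) := contXa.mono (Icc_subset_Icc hab.le le_rfl)
  have contfa : ContinuousOn (fun u => γ * (σs * Xa u - 1)) (Icc b T) :=
    continuousOn_const.mul ((continuousOn_const.mul contXa').sub continuousOn_const)
  have contfb : ContinuousOn (fun u => γ * (σs * Xb u - 1)) (Icc b T) :=
    continuousOn_const.mul ((continuousOn_const.mul contXb).sub continuousOn_const)
  have contEa : ContinuousOn
      (fun r => Xa r * Real.exp (∫ u in r..T, γ * (σs * Xa u - 1))) (Icc b T) := by
    apply contXa'.mul
    apply Real.continuous_exp.comp_continuousOn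
    rw [← uIcc_of_le hbT]
    exact continuousOn_primitive_interval_left
      (by rw [uIcc_of_le hbT]; exact contfa.integrableOn_Icc)
  have contEb : ContinuousOn
      (fun r => Xb r * Real.exp (∫ u in r..T, γ * (σs * Xb u - 1))) (Icc b T) := by
    apply contXb.mul
    apply Real.continuous_exp.comp_continuousOn
    rw [← uIcc_of_le hbT]
    exact continuousOn_primitive_interval_left
      (by rw [uIcc_of_le hbT]; exact contfb.integrableOn_Icc)
  have hrepAint : Ya T * (∫ r in b..T, Xa r / Ya r)
      = ∫ r in b..T, Xa r * Real.exp (∫ u in r..T, γ * (σs * Xa u - 1)) := by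
    rw [← intervalIntegral.integral_const_mul]
    apply integral_congr
    intro r hr
    rw [uIcc_of_le hbT] at hr
    exact hrepA' r hr
  have hrepBint : Yb T * (∫ r in b..T, Xb r / Yb r)
      = ∫ r in b..T, Xb r * Real.exp (∫ u in r..T, γ * (σs * Xb u - 1)) := by
    rw [← intervalIntegral.integral_const_mul]
    apply integral_congr
    intro r hr
    rw [uIcc_of_le hbT] at hr
    exact hrepB r hr
  have hptwise : ∀ r ∈ Icc b T,
      Xb r * Real.exp (∫ u in r..T, γ * (σs * Xb u - 1))
        ≤ Xa r * Real.exp (∫ u in r..T, γ * (σs * Xa u - 1)) := by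
    intro r hr
    have hinner : (∫ u in r..T, γ * (σs * Xb u - 1)) ≤ ∫ u in r..T, γ * (σs * Xa u - 1) := by
      apply integral_mono_on hr.2
        (my_intervalIntegrable contfb hbT hr hTIccB)
        (my_intervalIntegrable contfa hbT hr hTIccB)
      intro u hu
      have hc := hcomp u ⟨hr.1.trans hu.1, hu.2⟩
      have h0 : σs * Xb u ≤ σs * Xa u := mul_le_mul_of_nonneg_left hc hσs
      nlinarith
    exact mul_le_mul (hcomp r hr) (Real.exp_le_exp.2 hinner) (Real.exp_pos _).le
      (hbA' r hr).1.le
  have hchain : Yb T * (∫ r in b..T, Xb r / Yb r) ≤ Ya T * (∫ r in b..T, Xa r / Ya r) := by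
    rw [hrepAint, hrepBint]
    exact integral_mono_on hbT (my_intervalIntegrable contEb hbT hbIccB hTIccB)
      (my_intervalIntegrable contEa hbT hbIccB hTIccB) hptwise
  have hmain2 : (σf - σs) * Yb T * (∫ r in b..T, Xb r / Yb r)
      < (σf - σs) * Ya T * (∫ r in a..T, Xa r / Ya r) := by
    have hσfs : 0 < σf - σs := sub_pos.2 hσsf
    have h2 : 0 < Ya T * (∫ r in a..b, Xa r / Ya r) := mul_pos hYaTpos hIab_pos
    have h3 : Yb T * (∫ r in b..T, Xb r / Yb r) < Ya T * (∫ r in a..T, Xa r / Ya r) := by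
      rw [← hsplit, mul_add]
      linarith
    have := mul_lt_mul_of_pos_left h3 hσfs
    nlinarith [this]
  -- identities converting the first expression to the second
  have hIdA : ((∫ r in a..T, (σf * Xa r - 1) / Ya r) - 1 / (γ * K)) * Ya T
      = (σf - σs) * Ya T * (∫ r in a..T, Xa r / Ya r) - 1 / γ := by
    have hsplitfun : (∫ r in a..T, (σf * Xa r - 1) / Ya r)
        = (σf - σs) * (∫ r in a..T, Xa r / Ya r)
          + (∫ r in a..T, (σs * Xa r - 1) / Ya r) := by
      have hE : EqOn (fun r => (σf * Xa r - 1) / Ya r)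
          (fun r => (σf - σs) * (Xa r / Ya r) + (σs * Xa r - 1) / Ya r) (uIcc a T) := by
        intro r hr
        rw [uIcc_of_le haT] at hr
        have hyne := hYane r hr
        field_simp
        ring
      have hint1 : IntervalIntegrable (fun r => (σf - σs) * (Xa r / Ya r)) volume a T :=
        (my_intervalIntegrable contDivA haT haIccA hTIccA).const_mul _
      have hint2 : IntervalIntegrable (fun r => (σs * Xa r - 1) / Ya r) volume a T :=
        my_intervalIntegrable (f := fun r => (σs * Xa r - 1) / Ya r)
          (((continuousOn_const.mul contXa).sub continuousOn_const).div contYa hYane)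
          haT haIccA hTIccA
      rw [integral_congr hE, integral_add hint1 hint2, intervalIntegral.integral_const_mul]
    rw [hsplitfun, hftcA]
    have h1 : Ya T ≠ 0 := hYaTpos.ne'
    have h2 : γ ≠ 0 := hγ.ne'
    have h3 : K ≠ 0 := hK.ne'
    field_simp
    ring
  have hIdB : ((∫ r in b..T, (σf * Xb r - 1) / Yb r) - 1 / (γ * K)) * Yb T
      = (σf - σs) * Yb T * (∫ r in b..T, Xb r / Yb r) - 1 / γ := by
    have hsplitfun : (∫ r in b..T, (σf * Xb r - 1) / Yb r)
        = (σf - σs) * (∫ r in b..T, Xb r / Yb r)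
          + (∫ r in b..T, (σs * Xb r - 1) / Yb r) := by
      have hE : EqOn (fun r => (σf * Xb r - 1) / Yb r)
          (fun r => (σf - σs) * (Xb r / Yb r) + (σs * Xb r - 1) / Yb r) (uIcc b T) := by
        intro r hr
        rw [uIcc_of_le hbT] at hr
        have hyne := hYbne r hr
        field_simp
        ring
      have hint1 : IntervalIntegrable (fun r => (σf - σs) * (Xb r / Yb r)) volume b T :=
        (my_intervalIntegrable contDivB hbT hbIccB hTIccB).const_mul _
      have hint2 : IntervalIntegrable (fun r => (σs * Xb r - 1) / Yb r) volume b T :=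
        my_intervalIntegrable (f := fun r => (σs * Xb r - 1) / Yb r)
          (((continuousOn_const.mul contXb).sub continuousOn_const).div contYb hYbne)
          hbT hbIccB hTIccB
      rw [integral_congr hE, integral_add hint1 hint2, intervalIntegral.integral_const_mul]
    rw [hsplitfun, hftcB]
    have h1 : Yb T ≠ 0 := hYbTpos.ne'
    have h2 : γ ≠ 0 := hγ.ne'
    have h3 : K ≠ 0 := hK.ne'
    field_simp
    ring
  exact ⟨by rw [hIdA, hIdB]; linarith, by linarith⟩
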